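/- Let X be a 2×2 complex matrix with trace zero, and let μ be an eigenvalue of X. Then the operator norm of exp(X) satisfies ‖exp(X)‖ ≤ c·e^{|Re μ|} for a constant c depending continuously on X; concretely, ‖exp(X)‖ ≤ (1 + ‖X‖)·e^{|Re μ|}. -/

import Mathlib

open Matrix Polynomial
open scoped Matrix.Norms.L2Operator

lemma cosh_norm_le (z : ℂ) (r : ℝ) (hr : |z.re| ≤ r) : ‖Complex.cosh z‖ ≤ Real.exp r := by
  rw [Complex.cosh]
  calc ‖(Complex.exp z + Complex.exp (-z)) / 2‖
      ≤ (‖Complex.exp z‖ + ‖Complex.exp (-z)‖) / 2 := by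
        rw [norm_div]
        simp only [Complex.norm_ofNat]
        gcongr
        exact norm_add_le _ _
    _ ≤ (Real.exp r + Real.exp r) / 2 := by
        rw [Complex.norm_exp, Complex.norm_exp]
        gcongr
        · exact le_trans (le_abs_self _) hr
        · simpa using le_trans (neg_le_abs _) hr
    _ = Real.exp r := by ring

lemma sinh_norm_le (z : ℂ) : ‖Complex.sinh z‖ ≤ ‖z‖ * Real.exp |z.re| := by
  have key : ∀ t ∈ Set.Icc (0:ℝ) 1, HasDerivWithinAt (fun t : ℝ => Complex.sinh (t * z))
      (Complex.cosh (t * z) * z) (Set.Icc 0 1) t := by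
    intro t _
    have hg : HasDerivAt (fun t : ℝ => (t : ℂ) * z) z t := by
      simpa using (Complex.ofRealCLM.hasDerivAt (x := t)).mul_const z
    exact ((Complex.hasDerivAt_sinh ((t:ℂ) * z)).comp t hg).hasDerivWithinAt
  have bound : ∀ t ∈ Set.Icc (0:ℝ) 1,
      ‖Complex.cosh ((t:ℂ) * z) * z‖ ≤ Real.exp |z.re| * ‖z‖ := by
    intro t ht
    rw [norm_mul]
    have h1 : ‖Complex.cosh ((t:ℂ) * z)‖ ≤ Real.exp |z.re| := by
      apply cosh_norm_le
      have : ((t:ℂ) * z).re = t * z.re := by simp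
      rw [this, abs_mul, abs_of_nonneg ht.1]
      nlinarith [abs_nonneg z.re, ht.1, ht.2]
    have h2 : ‖z‖ = ‖z‖ := rfl
    rw [h2]
    exact mul_le_mul_of_nonneg_right h1 (norm_nonneg z)
  have := (convex_Icc (0:ℝ) 1).norm_image_sub_le_of_norm_hasDerivWithin_le key bound
    (Set.left_mem_Icc.2 zero_le_one) (Set.right_mem_Icc.2 zero_le_one)
  simpa [mul_comm] using this

set_option maxHeartbeats 1000000 in
/-- For a traceless `2×2` complex matrix `M` with eigenvalue `μ` (so the eigenvalues are
`±μ`), the operator norm of `exp M` satisfies `‖exp M‖ ≤ (1 + ‖M‖)·e^{|Re μ|}`. -/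
theorem stmt4 (M : Matrix (Fin 2) (Fin 2) ℂ) (htr : M.trace = 0) (μ : ℂ)
    (hμ : M.charpoly = (X - C μ) * (X + C μ)) :
    ‖NormedSpace.exp M‖ ≤ (1 + ‖M‖) * Real.exp |μ.re| := by
  -- Cayley–Hamilton gives M ^ 2 = μ ^ 2 • 1
  have hCH := M.aeval_self_charpoly
  rw [hμ] at hCH
  simp only [_root_.map_mul, map_sub, map_add, aeval_X, aeval_C] at hCH
  have hM2 : M ^ 2 = (μ ^ 2) • (1 : Matrix (Fin 2) (Fin 2) ℂ) := by
    have hc := Algebra.commutes μ M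
    have h0 : M * M - algebraMap ℂ (Matrix (Fin 2) (Fin 2) ℂ) μ
        * algebraMap ℂ (Matrix (Fin 2) (Fin 2) ℂ) μ = 0 := by
      rw [← hCH]; noncomm_ring [hc]
    have : M * M = algebraMap ℂ (Matrix (Fin 2) (Fin 2) ℂ) μ
        * algebraMap ℂ (Matrix (Fin 2) (Fin 2) ℂ) μ := by
      linear_combination (norm := noncomm_ring) h0
    rw [sq, this, ← _root_.map_mul, ← sq, Algebra.algebraMap_eq_smul_one]
  have heven : ∀ k : ℕ, M ^ (2 * k) = (μ ^ (2 * k)) • (1 : Matrix (Fin 2) (Fin 2) ℂ) := by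
    intro k; rw [pow_mul, hM2, _root_.smul_pow, one_pow, ← pow_mul]
  have hodd : ∀ k : ℕ, M ^ (2 * k + 1) = (μ ^ (2 * k)) • M := by
    intro k; rw [pow_succ, heven, smul_mul_assoc, one_mul]
  set s : ℂ := ∑' k : ℕ, μ ^ (2 * k) / (2 * k + 1).factorial with hs_def
  have hg : Summable (fun k : ℕ => μ ^ (2 * k) / ((2 * k + 1).factorial : ℂ)) := by
    apply Summable.of_norm
    refine Summable.of_nonneg_of_le (fun k => norm_nonneg _) ?_
      (Real.hasSum_cosh (‖μ‖)).summable
    intro k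
    rw [norm_div, norm_pow]
    have h1 : ((2 * k).factorial : ℝ) ≤ ‖((2 * k + 1).factorial : ℂ)‖ := by
      rw [Complex.norm_natCast]
      exact_mod_cast Nat.factorial_le (Nat.le_succ _)
    have h2 : (0:ℝ) < (2 * k).factorial := by positivity
    apply div_le_div_of_nonneg_left (by positivity) h2 h1
  -- closed form for exp M
  have hEven : HasSum (fun k : ℕ => (((2 * k).factorial : ℂ)⁻¹) • M ^ (2 * k))
      (Complex.cosh μ • (1 : Matrix (Fin 2) (Fin 2) ℂ)) := by
    have := (Complex.hasSum_cosh μ).smul_const (1 : Matrix (Fin 2) (Fin 2) ℂ)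
    convert this using 2 with k
    rw [heven, smul_smul, div_eq_inv_mul]
  have hOdd : HasSum (fun k : ℕ => (((2 * k + 1).factorial : ℂ)⁻¹) • M ^ (2 * k + 1)) (s • M) := by
    have := hg.hasSum.smul_const M
    convert this using 2 with k
    rw [hodd, smul_smul, div_eq_inv_mul]
  have hexp : NormedSpace.exp M = Complex.cosh μ • 1 + s • M := by
    have hsum := HasSum.even_add_odd
      (f := fun n : ℕ => ((n.factorial : ℂ)⁻¹) • M ^ n) hEven hOdd
    rw [NormedSpace.exp_eq_tsum ℂ]
    exact hsum.tsum_eq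
  -- bound on s
  have hs_le : ‖s‖ ≤ Real.exp |μ.re| := by
    by_cases hμ0 : μ = 0
    · have : s = 1 := by
        rw [hs_def, tsum_eq_single 0]
        · norm_num
        · intro k hk
          rw [hμ0, zero_pow (by positivity), zero_div]
      rw [this, norm_one]
      exact Real.one_le_exp (abs_nonneg _)
    · have hsum : HasSum (fun k : ℕ => μ ^ (2 * k + 1) / ((2 * k + 1).factorial : ℂ)) (s * μ) := by
        have := hg.hasSum.mul_right μ
        convert this using 2 with k
        · rfl
        rw [div_mul_eq_mul_div, pow_succ]
      have hsinh : s * μ = Complex.sinh μ := hsum.unique (Complex.hasSum_sinh μ)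
      have habs : ‖s‖ * ‖μ‖ ≤ ‖μ‖ * Real.exp |μ.re| := by
        calc ‖s‖ * ‖μ‖ = ‖s * μ‖ := (norm_mul _ _).symm
          _ = ‖Complex.sinh μ‖ := by rw [hsinh]
          _ ≤ ‖μ‖ * Real.exp |μ.re| := sinh_norm_le μ
      have hpos : 0 < ‖μ‖ := norm_pos_iff.mpr hμ0
      calc ‖s‖ = ‖s‖ * ‖μ‖ / ‖μ‖ := by field_simp
        _ ≤ ‖μ‖ * Real.exp |μ.re| / ‖μ‖ := by gcongr
        _ = Real.exp |μ.re| := by field_simp [mul_comm]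
  have hcosh : ‖Complex.cosh μ‖ ≤ Real.exp |μ.re| := cosh_norm_le μ _ le_rfl
  calc ‖NormedSpace.exp M‖ = ‖Complex.cosh μ • (1 : Matrix (Fin 2) (Fin 2) ℂ) + s • M‖ := by
        rw [hexp]
    _ ≤ ‖Complex.cosh μ • (1 : Matrix (Fin 2) (Fin 2) ℂ)‖ + ‖s • M‖ := norm_add_le _ _
    _ = ‖Complex.cosh μ‖ * ‖(1 : Matrix (Fin 2) (Fin 2) ℂ)‖ + ‖s‖ * ‖M‖ := by
        rw [norm_smul, norm_smul]
    _ ≤ Real.exp |μ.re| * 1 + Real.exp |μ.re| * ‖M‖ := by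
        rw [norm_one]
        gcongr
    _ = (1 + ‖M‖) * Real.exp |μ.re| := by ring
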